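/- Let F ∈ ℤ[Y, X_1, X_2] with F = F_top + F_0 where F_top(Y^e, X_1, X_2) is homogeneous of degree de, F_top is monic of degree d in Y, F_top is absolutely irreducible, and F_0(Y^e,X_1,X_2) has total degree < de. Let X = V(F) ⊂ 𝔸^3 and π: 𝔸^3 → 𝔸^2 the projection to (X_1,X_2). If ℓ ⊂ X is a twisted line over ℚ (a subvariety such that π(ℓ) is a line and π|_ℓ is an isomorphism onto π(ℓ)), then there exist rationals a_0, a_1, a_2, v_1, v_2, w_1,…,w_e such that ℓ(ℚ) = {(a_0 + t w_1 + t^2 w_2 + … + t^e w_e, a_1 + t v_1, a_2 + t v_2) : t ∈ ℚ}, where moreover one can take v_1, v_2 to be coprime integers and then w_e is an integer. -/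

import Mathlib

open MvPolynomial

lemma aux_coprime_dir (r1 r2 : ℚ) (h : ¬(r1 = 0 ∧ r2 = 0)) :
    ∃ (v1 v2 : ℤ) (l : ℚ), l ≠ 0 ∧ r1 = l * v1 ∧ r2 = l * v2 ∧ Int.gcd v1 v2 = 1 := by
  obtain ⟨n1, hn1⟩ : ∃ n : ℤ, n = r1.num * r2.den := ⟨_, rfl⟩
  obtain ⟨n2, hn2⟩ : ∃ n : ℤ, n = r2.num * r1.den := ⟨_, rfl⟩
  have hden1 : (r1.den : ℚ) ≠ 0 := by exact_mod_cast r1.den_nz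
  have hden2 : (r2.den : ℚ) ≠ 0 := by exact_mod_cast r2.den_nz
  have hr1 : r1 = (n1 : ℚ) / (r1.den * r2.den) := by
    rw [hn1]; push_cast
    rw [mul_comm (r1.den : ℚ) (r2.den : ℚ), ← div_div,
      mul_div_assoc, div_self hden2, mul_one, Rat.num_div_den]
  have hr2 : r2 = (n2 : ℚ) / (r1.den * r2.den) := by
    rw [hn2]; push_cast
    rw [← div_div, mul_div_assoc, div_self hden1, mul_one, Rat.num_div_den]
  have hne : ¬(n1 = 0 ∧ n2 = 0) := by
    rintro ⟨h1, h2⟩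
    exact h ⟨by rw [hr1, h1]; simp, by rw [hr2, h2]; simp⟩
  have hg : 0 < Int.gcd n1 n2 := by
    rw [Int.gcd_pos_iff]
    by_contra hc; push_neg at hc; exact hne ⟨by tauto, by tauto⟩
  obtain ⟨v1, v2, hcop, he1, he2⟩ := Int.exists_gcd_one hg
  have hgQ : ((Int.gcd n1 n2 : ℤ) : ℚ) ≠ 0 := by exact_mod_cast hg.ne'
  refine ⟨v1, v2, ((Int.gcd n1 n2 : ℤ) : ℚ) / (r1.den * r2.den), ?_, ?_, ?_, hcop⟩
  · positivity
  · have hc1 : (n1 : ℚ) = (v1 : ℚ) * ((Int.gcd n1 n2 : ℤ) : ℚ) := by exact_mod_cast he1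
    conv_lhs => rw [hr1, hc1]
    ring
  · have hc2 : (n2 : ℚ) = (v2 : ℚ) * ((Int.gcd n1 n2 : ℤ) : ℚ) := by exact_mod_cast he2
    conv_lhs => rw [hr2, hc2]
    ring

lemma aux_deg {R : Type*} [CommSemiring R] (p q r : Polynomial R) (u v w : ℕ)
    (hp : p.natDegree ≤ u) (hq : q.natDegree ≤ v) (hr : r.natDegree ≤ w)
    (m0 m1 m2 : ℕ) :
    (p ^ m0 * q ^ m1 * r ^ m2).natDegree ≤ m0 * u + m1 * v + m2 * w := by
  refine Polynomial.natDegree_mul_le.trans (add_le_add (Polynomial.natDegree_mul_le.trans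
    (add_le_add ?_ ?_)) ?_) <;> exact (Polynomial.natDegree_pow_le_of_le _ ‹_›)

lemma aux_coeff {R : Type*} [CommSemiring R] (p q r : Polynomial R) (u v w : ℕ)
    (hp : p.natDegree ≤ u) (hq : q.natDegree ≤ v) (hr : r.natDegree ≤ w)
    (m0 m1 m2 : ℕ) :
    (p ^ m0 * q ^ m1 * r ^ m2).coeff (m0 * u + m1 * v + m2 * w)
      = p.coeff u ^ m0 * q.coeff v ^ m1 * r.coeff w ^ m2 := by
  rw [Polynomial.coeff_mul_add_eq_of_natDegree_le (Polynomial.natDegree_mul_le.trans (add_le_add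
      (Polynomial.natDegree_pow_le_of_le _ hp) (Polynomial.natDegree_pow_le_of_le _ hq)))
      (Polynomial.natDegree_pow_le_of_le _ hr),
    Polynomial.coeff_mul_add_eq_of_natDegree_le (Polynomial.natDegree_pow_le_of_le _ hp)
      (Polynomial.natDegree_pow_le_of_le _ hq),
    Polynomial.coeff_pow_of_natDegree_le hp, Polynomial.coeff_pow_of_natDegree_le hq,
    Polynomial.coeff_pow_of_natDegree_le hr]

lemma aux_sum {S : Type*} [CommRing S] (F : MvPolynomial (Fin 3) ℤ)
    (P : Fin 3 → Polynomial S) (k : ℕ) :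
    (MvPolynomial.aeval P F).coeff k
      = ∑ m ∈ F.support, ((F.coeff m : ℤ) : S) * (P 0 ^ m 0 * P 1 ^ m 1 * P 2 ^ m 2).coeff k := by
  rw [MvPolynomial.aeval_def, MvPolynomial.eval₂_eq', Polynomial.finset_sum_coeff]
  refine Finset.sum_congr rfl fun m _ => ?_
  have h1 : (algebraMap ℤ (Polynomial S)) (F.coeff m) = Polynomial.C ((F.coeff m : ℤ) : S) := by
    simp [algebraMap_int_eq, Polynomial.C_eq_intCast]
  rw [Fin.prod_univ_three, h1, Polynomial.coeff_C_mul]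

/-- **Parametrization of twisted lines** (Lemma 4.2). Let `F = F_top + F_0` where
`F_top ∈ ℤ[Y,X_1,X_2]` is weighted homogeneous of degree `de` with weights `(e,1,1)`,
monic of degree `d` in `Y` and absolutely irreducible, and `F_0(Y^e,X)` has degree
`< de`. If `ℓ ⊂ X = V(F) ⊂ 𝔸³` is a twisted line over `ℚ` (i.e. its projection to the
`(X_1,X_2)`-plane is a line and the projection restricted to `ℓ` is an isomorphism onto
this line, with polynomial inverse given by a section `g`), then
`ℓ(ℚ) = {(a_0 + t w_1 + … + t^e w_e, a_1 + t v_1, a_2 + t v_2) : t ∈ ℚ}` where one can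
take `v_1, v_2` coprime integers, and then `w_e` is an integer. -/
theorem stmt_8 (d e : ℕ) (hd : 2 ≤ d) (he : 1 ≤ e)
    (Ftop F0 F : MvPolynomial (Fin 3) ℤ)
    (hhom : ∀ m ∈ Ftop.support, e * m 0 + m 1 + m 2 = d * e)
    (hmonic : Ftop.coeff (Finsupp.single 0 d) = 1)
    (habs : Irreducible (MvPolynomial.map (Int.castRingHom (AlgebraicClosure ℚ)) Ftop))
    (hF0 : ∀ m ∈ F0.support, e * m 0 + m 1 + m 2 < d * e)
    (hF : F = Ftop + F0)
    (ℓ : Set (ℚ × ℚ × ℚ))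
    (hvan : ∀ p ∈ ℓ, MvPolynomial.aeval ![p.1, p.2.1, p.2.2] F = (0 : ℚ))
    (hline : ∃ a b c : ℚ, (a, b) ≠ (0, 0) ∧
      {x : ℚ × ℚ | ∃ p ∈ ℓ, x = (p.2.1, p.2.2)} = {x : ℚ × ℚ | a * x.1 + b * x.2 = c})
    (hsec : ∃ g : MvPolynomial (Fin 2) ℚ, ∀ p ∈ ℓ, p.1 = MvPolynomial.eval ![p.2.1, p.2.2] g) :
    ∃ (a0 a1 a2 : ℚ) (v1 v2 we : ℤ) (w : Fin e → ℚ),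
      Int.gcd v1 v2 = 1 ∧ w ⟨e - 1, by omega⟩ = (we : ℚ) ∧
      ℓ = {p : ℚ × ℚ × ℚ | ∃ t : ℚ,
        p = (a0 + ∑ i : Fin e, w i * t ^ ((i : ℕ) + 1),
          a1 + t * (v1 : ℚ), a2 + t * (v2 : ℚ))} := by
  obtain ⟨a, b, c, hab, hLeq⟩ := hline
  obtain ⟨g, hg⟩ := hsec
  -- choose a coprime integer direction for the line
  obtain ⟨v1, v2, l, hl, hb', ha', hcop⟩ := aux_coprime_dir (-b) a (by
    rintro ⟨h1, h2⟩
    exact hab (by simp [Prod.ext_iff, h2, neg_eq_zero.mp h1]))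
  have hbb : b = -(l * v1) := by linarith
  -- choose a base point on the line
  obtain ⟨a1, a2, hpt⟩ : ∃ x y : ℚ, a * x + b * y = c := by
    rcases eq_or_ne a 0 with h0 | h0
    · have hb0 : b ≠ 0 := fun hb0 => hab (by simp [Prod.ext_iff, h0, hb0])
      exact ⟨0, c / b, by field_simp; ring⟩
    · exact ⟨c / a, 0, by field_simp; ring⟩
  have hdir : a * v1 + b * v2 = 0 := by rw [ha', hbb]; ring
  have hvne : ¬((v1 : ℚ) = 0 ∧ (v2 : ℚ) = 0) := by
    rintro ⟨h1, h2⟩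
    have e1 : v1 = 0 := by exact_mod_cast h1
    have e2 : v2 = 0 := by exact_mod_cast h2
    rw [e1, e2] at hcop
    simp at hcop
  have hkey : ∀ x y : ℚ, a * x + b * y = c → (v2 : ℚ) * (x - a1) = v1 * (y - a2) := by
    intro x y hxy
    apply mul_left_cancel₀ hl
    linear_combination hxy - hpt - (x - a1) * ha' + (y - a2) * hb'
  have hparam : ∀ x y : ℚ, a * x + b * y = c ↔ ∃ t : ℚ, x = a1 + t * v1 ∧ y = a2 + t * v2 := by
    intro x y
    constructor
    · intro hxy
      have hk := hkey x y hxy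
      rcases eq_or_ne (v1 : ℚ) 0 with h1 | h1
      · have h2 : (v2 : ℚ) ≠ 0 := fun h2 => hvne ⟨h1, h2⟩
        refine ⟨(y - a2) / v2, ?_, by field_simp; ring⟩
        have hz : (v2 : ℚ) * (x - a1) = 0 := by rw [hk, h1]; ring
        rcases mul_eq_zero.mp hz with h | h
        · exact absurd h h2
        · rw [h1]; rw [sub_eq_zero] at h; rw [h]; ring
      · refine ⟨(x - a1) / v1, by field_simp; ring, ?_⟩
        field_simp
        linear_combination -hk
    · rintro ⟨t, rfl, rfl⟩
      linear_combination hpt + t * hdir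
  -- characterize ℓ
  have hmem : ∀ p : ℚ × ℚ × ℚ, p ∈ ℓ ↔ ∃ t : ℚ,
      p = (MvPolynomial.eval ![a1 + t * v1, a2 + t * v2] g, a1 + t * v1, a2 + t * v2) := by
    intro p
    constructor
    · intro hp
      have h1 : (p.2.1, p.2.2) ∈ {x : ℚ × ℚ | a * x.1 + b * x.2 = c} := by
        rw [← hLeq]; exact ⟨p, hp, rfl⟩
      obtain ⟨t, hx, hy⟩ := (hparam _ _).mp h1
      refine ⟨t, ?_⟩
      rw [← hx, ← hy]
      exact Prod.ext (by rw [hg p hp]) (Prod.ext rfl rfl)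
    · rintro ⟨t, rfl⟩
      have hxy : (a1 + t * v1, a2 + t * v2) ∈ {x : ℚ × ℚ | a * x.1 + b * x.2 = c} :=
        (hparam _ _).mpr ⟨t, rfl, rfl⟩
      rw [← hLeq] at hxy
      obtain ⟨q, hq, hq2⟩ := hxy
      have hx : a1 + t * v1 = q.2.1 := congrArg Prod.fst hq2
      have hy : a2 + t * v2 = q.2.2 := congrArg Prod.snd hq2
      have hQ : q = (MvPolynomial.eval ![a1 + t * v1, a2 + t * v2] g,
          a1 + t * v1, a2 + t * v2) := by
        refine Prod.ext ?_ (Prod.ext hx.symm hy.symm)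
        rw [hg q hq, hx, hy]
      rwa [hQ] at hq
  -- set up polynomials in one variable t
  obtain ⟨x1, hx1⟩ : ∃ p : Polynomial ℚ, p = Polynomial.C a1 + Polynomial.C (v1 : ℚ) * Polynomial.X := ⟨_, rfl⟩
  obtain ⟨x2, hx2⟩ : ∃ p : Polynomial ℚ, p = Polynomial.C a2 + Polynomial.C (v2 : ℚ) * Polynomial.X := ⟨_, rfl⟩
  obtain ⟨G, hGdef⟩ : ∃ p : Polynomial ℚ, p = MvPolynomial.aeval ![x1, x2] g := ⟨_, rfl⟩
  have hx1deg : x1.natDegree ≤ 1 := by rw [hx1]; compute_degree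
  have hx2deg : x2.natDegree ≤ 1 := by rw [hx2]; compute_degree
  have hx1c : x1.coeff 1 = (v1 : ℚ) := by rw [hx1]; simp
  have hx2c : x2.coeff 1 = (v2 : ℚ) := by rw [hx2]; simp
  have hx1e : ∀ t : ℚ, x1.eval t = a1 + t * v1 := by intro t; rw [hx1]; simp [mul_comm]
  have hx2e : ∀ t : ℚ, x2.eval t = a2 + t * v2 := by intro t; rw [hx2]; simp [mul_comm]
  have hGeval : ∀ t : ℚ, G.eval t = MvPolynomial.eval ![a1 + t * v1, a2 + t * v2] g := by
    intro t
    rw [hGdef, MvPolynomial.aeval_def]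
    have step := MvPolynomial.eval₂_comp_left (Polynomial.evalRingHom t)
      (algebraMap ℚ (Polynomial ℚ)) ![x1, x2] g
    have h1 : (Polynomial.evalRingHom t).comp (algebraMap ℚ (Polynomial ℚ)) = RingHom.id ℚ := by
      ext r; simp
    have h2 : (Polynomial.evalRingHom t) ∘ ![x1, x2] = ![a1 + t * v1, a2 + t * v2] := by
      funext i; fin_cases i <;> simp [hx1e t, hx2e t]
    rw [h1, h2] at step
    exact step
  have hHeval : ∀ t : ℚ, (MvPolynomial.aeval ![G, x1, x2] F : Polynomial ℚ).eval t
      = MvPolynomial.aeval ![G.eval t, a1 + t * v1, a2 + t * v2] F := by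
    intro t
    rw [MvPolynomial.aeval_def, MvPolynomial.aeval_def]
    have step := MvPolynomial.eval₂_comp_left (Polynomial.evalRingHom t)
      (algebraMap ℤ (Polynomial ℚ)) ![G, x1, x2] F
    have h1 : (Polynomial.evalRingHom t).comp (algebraMap ℤ (Polynomial ℚ)) = algebraMap ℤ ℚ :=
      Subsingleton.elim _ _
    have h2 : (Polynomial.evalRingHom t) ∘ ![G, x1, x2] = ![G.eval t, a1 + t * v1, a2 + t * v2] := by
      funext i; fin_cases i <;> simp [hx1e t, hx2e t]
    rw [h1, h2] at step
    exact step
  have hH0 : (MvPolynomial.aeval ![G, x1, x2] F : Polynomial ℚ) = 0 := by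
    apply Polynomial.funext
    intro t
    rw [Polynomial.eval_zero, hHeval t]
    have hmemt : ((Polynomial.eval t G, a1 + t * v1, a2 + t * v2) : ℚ × ℚ × ℚ) ∈ ℓ :=
      (hmem _).mpr ⟨t, by rw [hGeval t]⟩
    simpa using hvan _ hmemt
  -- basic coefficient facts
  have hFcoeff : ∀ m : Fin 3 →₀ ℕ, F.coeff m = Ftop.coeff m + F0.coeff m := by
    intro m; rw [hF, MvPolynomial.coeff_add]
  have hF0s0d : F0.coeff (Finsupp.single 0 d) = 0 := by
    by_contra hne
    have h1 := hF0 _ (MvPolynomial.mem_support_iff.mpr hne)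
    have h2 : (Finsupp.single (0 : Fin 3) d) 0 = d := Finsupp.single_eq_same
    have h3 : (Finsupp.single (0 : Fin 3) d) 1 = 0 := Finsupp.single_eq_of_ne (by decide)
    have h4 : (Finsupp.single (0 : Fin 3) d) 2 = 0 := Finsupp.single_eq_of_ne (by decide)
    rw [h2, h3, h4, add_zero, add_zero, mul_comm e d] at h1
    exact lt_irrefl _ h1
  have hFs0d : F.coeff (Finsupp.single 0 d) = 1 := by
    rw [hFcoeff, hmonic, hF0s0d, add_zero]
  have hs0dmem : (Finsupp.single 0 d : Fin 3 →₀ ℕ) ∈ F.support :=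
    MvPolynomial.mem_support_iff.mpr (by rw [hFs0d]; exact one_ne_zero)
  have hdisj : ∀ m : Fin 3 →₀ ℕ, Ftop.coeff m ≠ 0 → F0.coeff m = 0 := by
    intro m hm
    by_contra h0
    have h1 := hhom _ (MvPolynomial.mem_support_iff.mpr hm)
    have h2 := hF0 _ (MvPolynomial.mem_support_iff.mpr h0)
    rw [h1] at h2
    exact lt_irrefl _ h2
  have hsingle : ∀ m : Fin 3 →₀ ℕ, m 0 = d → m 1 = 0 → m 2 = 0 → m = Finsupp.single 0 d := by
    intro m h0 h1 h2
    ext i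
    fin_cases i
    · simpa using h0
    · simpa using h1
    · simpa using h2
  have hm0le : ∀ m : Fin 3 →₀ ℕ, Ftop.coeff m ≠ 0 → m 0 ≤ d := by
    intro m hm
    have h1 := hhom _ (MvPolynomial.mem_support_iff.mpr hm)
    have h2 : e * m 0 ≤ d * e :=
      le_trans (Nat.le_add_right _ _) (le_trans (Nat.le_add_right _ _) (le_of_eq h1))
    rw [mul_comm d e] at h2
    exact Nat.le_of_mul_le_mul_left h2 (by omega)
  have hcase : ∀ m : Fin 3 →₀ ℕ, m ∈ F.support → Ftop.coeff m ≠ 0 ∨ F0.coeff m ≠ 0 := by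
    intro m hm
    by_contra hc
    push_neg at hc
    have h1 := MvPolynomial.mem_support_iff.mp hm
    rw [hFcoeff, hc.1, hc.2, add_zero] at h1
    exact h1 rfl
  have hstrict : ∀ N : ℕ, e < N → ∀ m : Fin 3 →₀ ℕ, m ∈ F.support →
      m ≠ Finsupp.single 0 d → m 0 * N + m 1 * 1 + m 2 * 1 < d * N := by
    intro N hN m hm hne
    rcases hcase m hm with hc | hc
    · have h1 := hhom _ (MvPolynomial.mem_support_iff.mpr hc)
      have hle := hm0le m hc
      have hlt : m 0 < d := by
        rcases Nat.lt_or_ge (m 0) d with h | h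
        · exact h
        · exfalso
          have h0 : m 0 = d := le_antisymm hle h
          rw [h0, mul_comm e d] at h1
          have h1' : d * e + (m 1 + m 2) = d * e + 0 := by
            rw [add_zero, ← add_assoc]; exact h1
          have h12 := Nat.add_left_cancel h1'
          exact hne (hsingle m h0 (by omega) (by omega))
      zify at h1 ⊢
      nlinarith [mul_pos (show (0:ℤ) < (d:ℤ) - m 0 by omega)
        (show (0:ℤ) < (N:ℤ) - e by omega)]
    · have h1 := hF0 _ (MvPolynomial.mem_support_iff.mpr hc)
      have hlt : m 0 < d := by
        by_contra hcon
        push_neg at hcon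
        have h2 : d * e ≤ e * m 0 := by
          rw [mul_comm d e]
          exact Nat.mul_le_mul_left e hcon
        exact absurd h1 (not_lt.mpr (le_trans h2
          (le_trans (Nat.le_add_right _ _) (Nat.le_add_right _ _))))
      zify at h1 ⊢
      nlinarith [mul_nonneg (show (0:ℤ) ≤ (d:ℤ) - m 0 by omega)
        (show (0:ℤ) ≤ (N:ℤ) - e by omega)]
  -- degree bound on G
  have hdegG : G.natDegree ≤ e := by
    by_contra hNc
    push_neg at hNc
    have hG0 : G ≠ 0 := by
      intro h
      rw [h, Polynomial.natDegree_zero] at hNc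
      omega
    have h0 : (0 : ℚ) = ∑ m ∈ F.support, ((F.coeff m : ℤ) : ℚ)
        * (G ^ m 0 * x1 ^ m 1 * x2 ^ m 2).coeff (d * G.natDegree) := by
      have haux := aux_sum F ![G, x1, x2] (d * G.natDegree)
      simp only [Matrix.cons_val_zero, Matrix.cons_val_one, Matrix.head_cons,
        Matrix.cons_val_two, Matrix.tail_cons] at haux
      rw [← haux, hH0, Polynomial.coeff_zero]
    rw [Finset.sum_eq_single (Finsupp.single 0 d)] at h0
    · have h2 : (Finsupp.single (0 : Fin 3) d) 0 = d := Finsupp.single_eq_same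
      have h3 : (Finsupp.single (0 : Fin 3) d) 1 = 0 := Finsupp.single_eq_of_ne (by decide)
      have h4 : (Finsupp.single (0 : Fin 3) d) 2 = 0 := Finsupp.single_eq_of_ne (by decide)
      rw [hFs0d, h2, h3, h4, pow_zero, pow_zero, mul_one, mul_one,
        Polynomial.coeff_pow_of_natDegree_le le_rfl] at h0
      simp only [Int.cast_one, one_mul] at h0
      have hlc : G.coeff G.natDegree ≠ 0 := by
        rw [← Polynomial.leadingCoeff]
        exact Polynomial.leadingCoeff_ne_zero.mpr hG0
      exact hlc (pow_eq_zero_iff (by omega : d ≠ 0) |>.mp h0.symm)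
    · intro m hm hne
      rw [Polynomial.coeff_eq_zero_of_natDegree_lt
        (lt_of_le_of_lt (aux_deg G x1 x2 G.natDegree 1 1 le_rfl hx1deg hx2deg _ _ _)
          (hstrict _ hNc m hm hne)), mul_zero]
    · intro hns
      exact absurd hs0dmem hns
  -- vanishing of Ftop at the leading coefficients
  have hweval : MvPolynomial.aeval ![(G.coeff e : ℚ), ((v1 : ℤ) : ℚ), ((v2 : ℤ) : ℚ)] Ftop = 0 := by
    have h0 : (0 : ℚ) = ∑ m ∈ F.support, ((F.coeff m : ℤ) : ℚ)
        * (G ^ m 0 * x1 ^ m 1 * x2 ^ m 2).coeff (d * e) := by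
      have haux := aux_sum F ![G, x1, x2] (d * e)
      simp only [Matrix.cons_val_zero, Matrix.cons_val_one, Matrix.head_cons,
        Matrix.cons_val_two, Matrix.tail_cons] at haux
      rw [← haux, hH0, Polynomial.coeff_zero]
    have hterm : ∀ m ∈ F.support, ((F.coeff m : ℤ) : ℚ)
        * (G ^ m 0 * x1 ^ m 1 * x2 ^ m 2).coeff (d * e)
        = ((Ftop.coeff m : ℤ) : ℚ) * (G.coeff e ^ m 0 * (v1 : ℚ) ^ m 1 * (v2 : ℚ) ^ m 2) := by
      intro m hm
      rcases hcase m hm with hc | hc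
      · have h1 := hhom _ (MvPolynomial.mem_support_iff.mpr hc)
        have hde : d * e = m 0 * e + m 1 * 1 + m 2 * 1 := by rw [← h1]; ring
        rw [hde, aux_coeff G x1 x2 e 1 1 hdegG hx1deg hx2deg, hx1c, hx2c,
          hFcoeff, hdisj m hc, add_zero]
      · have hFtop0 : Ftop.coeff m = 0 := by
          by_contra h
          exact hc (hdisj m h)
        have h1 := hF0 _ (MvPolynomial.mem_support_iff.mpr hc)
        have hdlt : (G ^ m 0 * x1 ^ m 1 * x2 ^ m 2).natDegree < d * e :=
          lt_of_le_of_lt (aux_deg G x1 x2 e 1 1 hdegG hx1deg hx2deg _ _ _) (by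
            calc m 0 * e + m 1 * 1 + m 2 * 1 = e * m 0 + m 1 + m 2 := by ring
              _ < d * e := h1)
        rw [Polynomial.coeff_eq_zero_of_natDegree_lt hdlt, mul_zero, hFtop0]
        simp
    rw [Finset.sum_congr rfl hterm] at h0
    have hsub : Ftop.support ⊆ F.support := by
      intro m hm
      have hc := MvPolynomial.mem_support_iff.mp hm
      apply MvPolynomial.mem_support_iff.mpr
      rw [hFcoeff, hdisj m hc, add_zero]
      exact hc
    rw [← Finset.sum_subset hsub (fun m _ hm => by
      rw [MvPolynomial.notMem_support_iff.mp hm]; simp)] at h0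
    rw [MvPolynomial.aeval_def, MvPolynomial.eval₂_eq']
    have hconv : ∑ m ∈ Ftop.support, (algebraMap ℤ ℚ) (Ftop.coeff m)
        * ∏ i : Fin 3, (![(G.coeff e : ℚ), ((v1 : ℤ) : ℚ), ((v2 : ℤ) : ℚ)]) i ^ m i
        = ∑ m ∈ Ftop.support, ((Ftop.coeff m : ℤ) : ℚ)
          * (G.coeff e ^ m 0 * (v1 : ℚ) ^ m 1 * (v2 : ℚ) ^ m 2) := by
      refine Finset.sum_congr rfl fun m _ => ?_
      rw [Fin.prod_univ_three]
      simp
    rw [hconv, ← h0]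
  -- integrality of the top coefficient
  obtain ⟨q, hqdef⟩ : ∃ p : Polynomial ℤ,
      p = MvPolynomial.aeval ![Polynomial.X, Polynomial.C v1, Polynomial.C v2] Ftop := ⟨_, rfl⟩
  have hqc : ∀ k : ℕ, q.coeff k = ∑ m ∈ Ftop.support, Ftop.coeff m *
      (Polynomial.X ^ m 0 * (Polynomial.C v1) ^ m 1 * (Polynomial.C v2) ^ m 2).coeff k := by
    intro k
    rw [hqdef]
    have haux := aux_sum Ftop ![Polynomial.X, Polynomial.C v1, Polynomial.C v2] k
    simp only [Matrix.cons_val_zero, Matrix.cons_val_one, Matrix.head_cons,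
      Matrix.cons_val_two, Matrix.tail_cons, Int.cast_id] at haux
    exact haux
  have hqdeg : q.natDegree ≤ d := by
    rw [hqdef, MvPolynomial.aeval_def, MvPolynomial.eval₂_eq']
    apply Polynomial.natDegree_sum_le_of_forall_le
    intro m hm
    refine le_trans Polynomial.natDegree_mul_le ?_
    have h1 : ((algebraMap ℤ (Polynomial ℤ)) (Ftop.coeff m)).natDegree = 0 := by
      simp [algebraMap_int_eq]
    rw [h1, zero_add, Fin.prod_univ_three]
    simp only [Matrix.cons_val_zero, Matrix.cons_val_one, Matrix.head_cons,
      Matrix.cons_val_two, Matrix.tail_cons]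
    refine le_trans (aux_deg _ _ _ 1 0 0 Polynomial.natDegree_X_le
      (le_of_eq (Polynomial.natDegree_C _)) (le_of_eq (Polynomial.natDegree_C _)) _ _ _) ?_
    have := hm0le m (MvPolynomial.mem_support_iff.mp hm)
    omega
  have hqd : q.coeff d = 1 := by
    rw [hqc d, Finset.sum_eq_single (Finsupp.single 0 d)]
    · have h2 : (Finsupp.single (0 : Fin 3) d) 0 = d := Finsupp.single_eq_same
      have h3 : (Finsupp.single (0 : Fin 3) d) 1 = 0 := Finsupp.single_eq_of_ne (by decide)
      have h4 : (Finsupp.single (0 : Fin 3) d) 2 = 0 := Finsupp.single_eq_of_ne (by decide)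
      rw [h2, h3, h4, pow_zero, pow_zero, mul_one, mul_one, hmonic, Polynomial.coeff_X_pow]
      simp
    · intro m hm hne
      have hc := MvPolynomial.mem_support_iff.mp hm
      have hle := hm0le m hc
      rcases Nat.lt_or_ge (m 0) d with h | h
      · rw [Polynomial.coeff_eq_zero_of_natDegree_lt (lt_of_le_of_lt
          (aux_deg _ _ _ 1 0 0 Polynomial.natDegree_X_le (le_of_eq (Polynomial.natDegree_C _))
            (le_of_eq (Polynomial.natDegree_C _)) _ _ _) (by omega)), mul_zero]
      · exfalso
        have h0 : m 0 = d := le_antisymm hle h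
        have h1 := hhom _ hm
        rw [h0, mul_comm e d] at h1
        have h1' : d * e + (m 1 + m 2) = d * e + 0 := by rw [add_zero, ← add_assoc]; exact h1
        have h12 := Nat.add_left_cancel h1'
        exact hne (hsingle m h0 (by omega) (by omega))
    · intro hns
      exact absurd (MvPolynomial.mem_support_iff.mpr (by rw [hmonic]; exact one_ne_zero)) hns
  have hqmonic : q.Monic := Polynomial.monic_of_natDegree_le_of_coeff_eq_one d hqdeg hqd
  have hint : IsIntegral ℤ (G.coeff e) := by
    refine ⟨q, hqmonic, ?_⟩
    have hcomp : Polynomial.eval₂ (algebraMap ℤ ℚ) (G.coeff e) q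
        = MvPolynomial.aeval ![(G.coeff e : ℚ), ((v1 : ℤ) : ℚ), ((v2 : ℤ) : ℚ)] Ftop := by
      rw [hqdef, MvPolynomial.aeval_def, MvPolynomial.aeval_def]
      have step := MvPolynomial.eval₂_comp_left
        (Polynomial.eval₂RingHom (algebraMap ℤ ℚ) (G.coeff e))
        (algebraMap ℤ (Polynomial ℤ)) ![Polynomial.X, Polynomial.C v1, Polynomial.C v2] Ftop
      have h1 : (Polynomial.eval₂RingHom (algebraMap ℤ ℚ) (G.coeff e)).comp
          (algebraMap ℤ (Polynomial ℤ)) = algebraMap ℤ ℚ := Subsingleton.elim _ _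
      have h2 : (⇑(Polynomial.eval₂RingHom (algebraMap ℤ ℚ) (G.coeff e)))
          ∘ ![Polynomial.X, Polynomial.C v1, Polynomial.C v2]
          = ![(G.coeff e : ℚ), ((v1 : ℤ) : ℚ), ((v2 : ℤ) : ℚ)] := by
        have hic : ∀ z : ℤ, Polynomial.eval₂ (Int.castRingHom ℚ) (G.coeff e)
            ((z : Polynomial ℤ)) = (z : ℚ) := by
          intro z
          rw [← Polynomial.C_eq_intCast, Polynomial.eval₂_C]
          simp
        funext i; fin_cases i <;> simp [hic]
      rw [h1, h2] at step
      exact step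
    rw [hcomp]
    exact hweval
  obtain ⟨we, hwe⟩ := IsIntegrallyClosed.isIntegral_iff.mp hint
  -- conclusion
  refine ⟨G.coeff 0, a1, a2, v1, v2, we, fun i => G.coeff ((i : ℕ) + 1), hcop, ?_, ?_⟩
  · show G.coeff ((((⟨e - 1, by omega⟩ : Fin e) : ℕ)) + 1) = (we : ℚ)
    have he1 : (((⟨e - 1, by omega⟩ : Fin e) : ℕ)) + 1 = e := by
      simp only []
      omega
    rw [he1, ← hwe]
    simp
  · ext p
    simp only [Set.mem_setOf_eq]
    rw [hmem p]
    refine exists_congr fun t => ?_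
    have hev : MvPolynomial.eval ![a1 + t * v1, a2 + t * v2] g
        = G.coeff 0 + ∑ i : Fin e, G.coeff ((i : ℕ) + 1) * t ^ ((i : ℕ) + 1) := by
      rw [← hGeval t,
        Polynomial.eval_eq_sum_range' (lt_of_le_of_lt hdegG (Nat.lt_succ_self e)) t,
        Finset.sum_range_succ']
      simp only [pow_zero, mul_one]
      rw [add_comm, Fin.sum_univ_eq_sum_range (fun i => G.coeff (i + 1) * t ^ (i + 1)) e]
    rw [hev]
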